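/- Under conditional independence of C and L given X, E[δ·ε·h(X) / P(L < X < C | X)] = E[h(X)] for any integrable function h, provided P(L < X < C | X) > 0 almost surely. -/

import Mathlib

open MeasureTheory ProbabilityTheory

/-- Under conditional independence of `C` and `L` given `X`,
`E[δ·ε·h(X) / P(L < X < C | X)] = E[h(X)]` for integrable `h`, provided
`P(L < X < C | X) > 0` almost surely. -/
theorem ipcw_unbiased_weight_identity
    {Ω : Type*} [m0 : MeasurableSpace Ω] (μ : Measure Ω) [IsProbabilityMeasure μ]
    (X C L : Ω → ℝ) (hX : Measurable X) (hC : Measurable C) (hL : Measurable L)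
    (h : ℝ → ℝ) (hmeas : Measurable h)
    (δ : Ω → ℝ) (hδ : δ = fun ω => if X ω < C ω then (1 : ℝ) else 0)
    (ε : Ω → ℝ) (hε : ε = fun ω => if L ω < min (X ω) (C ω) then (1 : ℝ) else 0)
    -- p = P(L < X < C | X), the conditional probability given σ(X):
    (p : Ω → ℝ)
    (hp : p =ᵐ[μ] μ[fun ω => (if L ω < X ω ∧ X ω < C ω then (1 : ℝ) else 0) |
        MeasurableSpace.comap X inferInstance])
    (hp_pos : ∀ᵐ ω ∂μ, 0 < p ω)
    -- conditional independence of C and L given X: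
    (hCI : (μ[fun ω => (if X ω < C ω then (1 : ℝ) else 0) *
              (if L ω < X ω then (1 : ℝ) else 0) | MeasurableSpace.comap X inferInstance])
        =ᵐ[μ] fun ω =>
          (μ[fun ω' => (if X ω' < C ω' then (1 : ℝ) else 0) |
              MeasurableSpace.comap X inferInstance]) ω *
          (μ[fun ω' => (if L ω' < X ω' then (1 : ℝ) else 0) |
              MeasurableSpace.comap X inferInstance]) ω)
    (hInt : Integrable (fun ω => δ ω * ε ω * h (X ω) / p ω) μ)
    (hInt' : Integrable (fun ω => h (X ω)) μ) :
    ∫ ω, δ ω * ε ω * h (X ω) / p ω ∂μ = ∫ ω, h (X ω) ∂μ := by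
  classical
  set m : MeasurableSpace Ω := MeasurableSpace.comap X inferInstance with hm_def
  have hm : m ≤ m0 := hX.comap_le
  set ind : Ω → ℝ := fun ω => if L ω < X ω ∧ X ω < C ω then (1 : ℝ) else 0 with hind_def
  set q : Ω → ℝ := μ[ind | m] with hq_def
  have hXm : Measurable[m] X := Measurable.of_comap_le le_rfl
  -- f is the m-measurable factor
  set f : Ω → ℝ := fun ω => h (X ω) / q ω with hf_def
  have hf_sm : StronglyMeasurable[m] f :=
    ((hmeas.comp hXm).div stronglyMeasurable_condExp.measurable).stronglyMeasurable
  -- ind is integrable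
  have hs : MeasurableSet[m0] {ω | L ω < X ω ∧ X ω < C ω} :=
    (measurableSet_lt hL hX).inter (measurableSet_lt hX hC)
  have hind_eq : ind = Set.indicator {ω | L ω < X ω ∧ X ω < C ω} (fun _ => (1 : ℝ)) := by
    funext ω; simp [hind_def, Set.indicator, Set.mem_setOf_eq]
  have hind_int : Integrable ind μ := by
    rw [hind_eq]
    exact (integrable_const (1 : ℝ)).indicator hs
  -- δ ω * ε ω = ind ω pointwise
  have hδε : ∀ ω, δ ω * ε ω = ind ω := by
    intro ω
    simp only [hδ, hε, hind_def, lt_min_iff]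
    by_cases h1 : X ω < C ω
    · by_cases h2 : L ω < X ω
      · simp [h1, h2, lt_trans h2 h1]
      · simp [h1, h2]
    · simp [h1]
  -- the integrand a.e. equals f * ind
  have hae : (fun ω => δ ω * ε ω * h (X ω) / p ω) =ᵐ[μ] f * ind := by
    filter_upwards [hp] with ω hpq
    simp only [hf_def, Pi.mul_apply, hpq, ← hδε ω]
    ring
  have hfg_int : Integrable (f * ind) μ := hInt.congr hae
  have key : μ[f * ind | m] =ᵐ[μ] f * q :=
    condExp_mul_of_stronglyMeasurable_left hf_sm hfg_int hind_int
  have hfq : f * q =ᵐ[μ] fun ω => h (X ω) := by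
    filter_upwards [hp, hp_pos] with ω hpq hpos
    have hq_pos : 0 < q ω := hpq ▸ hpos
    simp only [hf_def, Pi.mul_apply]
    field_simp
  calc ∫ ω, δ ω * ε ω * h (X ω) / p ω ∂μ
      = ∫ ω, (f * ind) ω ∂μ := integral_congr_ae hae
    _ = ∫ ω, (μ[f * ind | m]) ω ∂μ := (integral_condExp hm).symm
    _ = ∫ ω, h (X ω) ∂μ := integral_congr_ae (key.trans hfq)
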